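/- Theorem: Let 𝒜 be a finite set of 2×2 real matrices each with determinant 1. Then there exists a finite set ℬ of nondegenerate 2×2 real matrices such that: (a) for every sequence (A_n) ∈ 𝒜^∞ and every sequence (B_n) ∈ ℬ^∞, ‖A_n B_n ⋯ A_1 B_1‖ ≥ α^n for a fixed α > 1 (so no sequence in 𝒜 is ℬ-right-bounded); yet (b) for every x ∈ ℝ² and every sequence (A_n) ∈ 𝒜^∞ there exists a sequence (B_n) ∈ ℬ^∞ with A_n B_n ⋯ A_1 B_1 x → 0 (so every sequence in 𝒜 is pointwise ℬ-right-bounded). -/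
import Mathlib


attribute [local instance] Matrix.linftyOpNormedAddCommGroup Matrix.linftyOpNormedRing

/-- `prodAB A B n = (A n * B n) * ⋯ * (A 1 * B 1)`, with `prodAB A B 0 = 1`. -/
def prodAB (A : ℕ → Matrix (Fin 2) (Fin 2) ℝ)
    (B : ℕ → Matrix (Fin 2) (Fin 2) ℝ) : ℕ → Matrix (Fin 2) (Fin 2) ℝ
  | 0 => 1
  | n + 1 => A (n + 1) * B (n + 1) * prodAB A B n


lemma minsel (A B N : ℝ) (hsign : A * B ≤ 0) (hAB : (A-B)^2 ≤ 16/125*N) :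
    A^2 ≤ 4/125 * N ∨ B^2 ≤ 4/125 * N := by
  have hprod : -(A*B) ≤ 4/125 * N := by nlinarith [sq_nonneg (A+B)]
  rcases le_total (A^2) (B^2) with h | h
  · left; nlinarith [sq_nonneg (A+B), sq_nonneg (A-B)]
  · right; nlinarith [sq_nonneg (A+B), sq_nonneg (A-B)]

lemma two_of (p q p' q' a b : ℝ)
    (hdot : 117/125 ≤ p*p' + q*q') (h1 : p^2+q^2 = 1) (h2 : p'^2+q'^2 = 1)
    (hsign : (p*a+q*b) * (p'*a+q'*b) ≤ 0) :
    (p*a+q*b)^2 ≤ 4/125 * (a^2+b^2) ∨ (p'*a+q'*b)^2 ≤ 4/125*(a^2+b^2) := by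
  apply minsel _ _ _ hsign
  have cs : ((p-p')*a + (q-q')*b)^2 ≤ ((p-p')^2+(q-q')^2) * (a^2+b^2) := by
    nlinarith [sq_nonneg ((p-p')*b - (q-q')*a)]
  have hN : (0:ℝ) ≤ a^2+b^2 := by positivity
  have hdN : 0 ≤ (p*p'+q*q' - 117/125) * (a^2+b^2) := mul_nonneg (by linarith) hN
  nlinarith [cs, hdN]

/-- squared Euclidean norm of a vector in `Fin 2 → ℝ` -/
noncomputable def n2 (y : Fin 2 → ℝ) : ℝ := y 0 ^ 2 + y 1 ^ 2

/-- contraction matrix attached to a unit vector `(p,q)` -/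
noncomputable def Cmat (p q : ℝ) : Matrix (Fin 2) (Fin 2) ℝ := !![q/2, -(p/2); 9*p/4, 9*q/4]

noncomputable def wmats : List (Matrix (Fin 2) (Fin 2) ℝ) :=
  [Cmat 1 0, Cmat (24/25) (7/25), Cmat (4/5) (3/5), Cmat (3/5) (4/5),
   Cmat (7/25) (24/25), Cmat 0 1, Cmat (-(7/25)) (24/25), Cmat (-(3/5)) (4/5),
   Cmat (-(4/5)) (3/5), Cmat (-(24/25)) (7/25)]

lemma n2_mulVec (p q : ℝ) (y : Fin 2 → ℝ) :
    n2 ((Cmat p q).mulVec y)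
      = (q/2 * y 0 - p/2 * y 1)^2 + (9*p/4 * y 0 + 9*q/4 * y 1)^2 := by
  simp [n2, Cmat, Matrix.mulVec, dotProduct, Fin.sum_univ_two]
  ring

lemma contract (p q : ℝ) (h1 : p^2 + q^2 = 1) (y : Fin 2 → ℝ)
    (h : (p * y 0 + q * y 1)^2 ≤ 4/125 * (y 0 ^2 + y 1 ^2)) :
    n2 ((Cmat p q).mulVec y) ≤ 1/2 * n2 y := by
  rw [n2_mulVec, n2]
  nlinarith [h, sq_nonneg (p * y 0 + q * y 1), sq_nonneg (q * y 0 - p * y 1)]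

lemma cover (y : Fin 2 → ℝ) :
    ∃ C ∈ wmats, n2 (C.mulVec y) ≤ 1/2 * n2 y := by
  set a := y 0
  set b := y 1
  -- the eleven linear forms (last one is the negative of the first)
  have finish : ∀ p q : ℝ, p^2+q^2 = 1 → Cmat p q ∈ wmats →
      (p*a+q*b)^2 ≤ 4/125 * (a^2+b^2) → ∃ C ∈ wmats, n2 (C.mulVec y) ≤ 1/2 * n2 y :=
    fun p q h1 hm h => ⟨Cmat p q, hm, contract p q h1 y h⟩
  have m0 : Cmat 1 0 ∈ wmats := by simp [wmats]
  have m1 : Cmat (24/25) (7/25) ∈ wmats := by simp [wmats]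
  have m2 : Cmat (4/5) (3/5) ∈ wmats := by simp [wmats]
  have m3 : Cmat (3/5) (4/5) ∈ wmats := by simp [wmats]
  have m4 : Cmat (7/25) (24/25) ∈ wmats := by simp [wmats]
  have m5 : Cmat 0 1 ∈ wmats := by simp [wmats]
  have m6 : Cmat (-(7/25)) (24/25) ∈ wmats := by simp [wmats]
  have m7 : Cmat (-(3/5)) (4/5) ∈ wmats := by simp [wmats]
  have m8 : Cmat (-(4/5)) (3/5) ∈ wmats := by simp [wmats]
  have m9 : Cmat (-(24/25)) (7/25) ∈ wmats := by simp [wmats]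
  rcases le_or_gt ((1*a+0*b) * ((24/25)*a+(7/25)*b)) 0 with h|h0
  · rcases two_of 1 0 (24/25) (7/25) a b (by norm_num) (by norm_num) (by norm_num) h with h|h
    · exact finish 1 0 (by norm_num) m0 h
    · exact finish (24/25) (7/25) (by norm_num) m1 h
  rcases le_or_gt (((24/25)*a+(7/25)*b) * ((4/5)*a+(3/5)*b)) 0 with h|h1
  · rcases two_of (24/25) (7/25) (4/5) (3/5) a b (by norm_num) (by norm_num) (by norm_num) h with h|h
    · exact finish (24/25) (7/25) (by norm_num) m1 h
    · exact finish (4/5) (3/5) (by norm_num) m2 h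
  rcases le_or_gt (((4/5)*a+(3/5)*b) * ((3/5)*a+(4/5)*b)) 0 with h|h2
  · rcases two_of (4/5) (3/5) (3/5) (4/5) a b (by norm_num) (by norm_num) (by norm_num) h with h|h
    · exact finish (4/5) (3/5) (by norm_num) m2 h
    · exact finish (3/5) (4/5) (by norm_num) m3 h
  rcases le_or_gt (((3/5)*a+(4/5)*b) * ((7/25)*a+(24/25)*b)) 0 with h|h3
  · rcases two_of (3/5) (4/5) (7/25) (24/25) a b (by norm_num) (by norm_num) (by norm_num) h with h|h
    · exact finish (3/5) (4/5) (by norm_num) m3 h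
    · exact finish (7/25) (24/25) (by norm_num) m4 h
  rcases le_or_gt (((7/25)*a+(24/25)*b) * (0*a+1*b)) 0 with h|h4
  · rcases two_of (7/25) (24/25) 0 1 a b (by norm_num) (by norm_num) (by norm_num) h with h|h
    · exact finish (7/25) (24/25) (by norm_num) m4 h
    · exact finish 0 1 (by norm_num) m5 h
  rcases le_or_gt ((0*a+1*b) * ((-(7/25))*a+(24/25)*b)) 0 with h|h5
  · rcases two_of 0 1 (-(7/25)) (24/25) a b (by norm_num) (by norm_num) (by norm_num) h with h|h
    · exact finish 0 1 (by norm_num) m5 h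
    · exact finish (-(7/25)) (24/25) (by norm_num) m6 h
  rcases le_or_gt (((-(7/25))*a+(24/25)*b) * ((-(3/5))*a+(4/5)*b)) 0 with h|h6
  · rcases two_of (-(7/25)) (24/25) (-(3/5)) (4/5) a b (by norm_num) (by norm_num) (by norm_num) h with h|h
    · exact finish (-(7/25)) (24/25) (by norm_num) m6 h
    · exact finish (-(3/5)) (4/5) (by norm_num) m7 h
  rcases le_or_gt (((-(3/5))*a+(4/5)*b) * ((-(4/5))*a+(3/5)*b)) 0 with h|h7
  · rcases two_of (-(3/5)) (4/5) (-(4/5)) (3/5) a b (by norm_num) (by norm_num) (by norm_num) h with h|h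
    · exact finish (-(3/5)) (4/5) (by norm_num) m7 h
    · exact finish (-(4/5)) (3/5) (by norm_num) m8 h
  rcases le_or_gt (((-(4/5))*a+(3/5)*b) * ((-(24/25))*a+(7/25)*b)) 0 with h|h8
  · rcases two_of (-(4/5)) (3/5) (-(24/25)) (7/25) a b (by norm_num) (by norm_num) (by norm_num) h with h|h
    · exact finish (-(4/5)) (3/5) (by norm_num) m8 h
    · exact finish (-(24/25)) (7/25) (by norm_num) m9 h
  rcases le_or_gt (((-(24/25))*a+(7/25)*b) * ((-1)*a+0*b)) 0 with h|h9
  · rcases two_of (-(24/25)) (7/25) (-1) 0 a b (by norm_num) (by norm_num) (by norm_num) h with h|h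
    · exact finish (-(24/25)) (7/25) (by norm_num) m9 h
    · refine finish 1 0 (by norm_num) m0 ?_
      nlinarith [h]
  -- all ten products positive: impossible
  exfalso
  have H := mul_pos h0 (mul_pos h1 (mul_pos h2 (mul_pos h3 (mul_pos h4
      (mul_pos h5 (mul_pos h6 (mul_pos h7 (mul_pos h8 h9))))))))
  nlinarith [H, sq_nonneg ((1*a+0*b) * ((24/25)*a+(7/25)*b) * ((4/5)*a+(3/5)*b) *
    ((3/5)*a+(4/5)*b) * ((7/25)*a+(24/25)*b) * (0*a+1*b) * ((-(7/25))*a+(24/25)*b) *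
    ((-(3/5))*a+(4/5)*b) * ((-(4/5))*a+(3/5)*b) * ((-(24/25))*a+(7/25)*b))]

lemma det_wmats : ∀ C ∈ wmats, C.det = 9/8 := by
  intro C hC
  fin_cases hC <;> norm_num [Cmat, Matrix.det_fin_two]

lemma row_le_norm (M : Matrix (Fin 2) (Fin 2) ℝ) (i : Fin 2) :
    |M i 0| + |M i 1| ≤ ‖M‖ := by
  have h : (∑ j, ‖M i j‖₊) ≤ ‖M‖₊ := by
    rw [Matrix.linfty_opNNNorm_def]
    exact Finset.le_sup (f := fun i => ∑ j, ‖M i j‖₊) (Finset.mem_univ i)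
  have h2 := NNReal.coe_le_coe.2 h
  simpa [Fin.sum_univ_two, Real.norm_eq_abs] using h2

lemma abs_det_le (M : Matrix (Fin 2) (Fin 2) ℝ) : |M.det| ≤ ‖M‖ * ‖M‖ := by
  have h0 := row_le_norm M 0
  have h1 := row_le_norm M 1
  rw [Matrix.det_fin_two]
  have habs : |M 0 0 * M 1 1 - M 0 1 * M 1 0| ≤ |M 0 0| * |M 1 1| + |M 0 1| * |M 1 0| := by
    calc |M 0 0 * M 1 1 - M 0 1 * M 1 0| ≤ |M 0 0 * M 1 1| + |M 0 1 * M 1 0| := abs_sub _ _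
    _ = |M 0 0| * |M 1 1| + |M 0 1| * |M 1 0| := by rw [abs_mul, abs_mul]
  nlinarith [habs, h0, h1, abs_nonneg (M 0 0), abs_nonneg (M 0 1),
    abs_nonneg (M 1 0), abs_nonneg (M 1 1), norm_nonneg M]

/-- For every finite set `𝒜` of 2×2 real matrices of determinant `1` there is
a finite set `ℬ` of nondegenerate 2×2 matrices such that (a) all products
`A_n B_n ⋯ A_1 B_1` grow at least like `α ^ n` for a fixed `α > 1` (so no
sequence in `𝒜` is `ℬ`-right-bounded), yet (b) every sequence in `𝒜` is
pointwise `ℬ`-right-bounded: for each `x` and `(A_n)` one can choose `(B_n)`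
with `A_n B_n ⋯ A_1 B_1 x → 0`. -/
theorem stmt17 (𝒜 : Set (Matrix (Fin 2) (Fin 2) ℝ)) (h𝒜 : 𝒜.Finite)
    (hdet : ∀ A ∈ 𝒜, A.det = 1) :
    ∃ (ℬ : Set (Matrix (Fin 2) (Fin 2) ℝ)) (α : ℝ), ℬ.Finite ∧ 1 < α ∧
      (∀ B ∈ ℬ, B.det ≠ 0) ∧
      (∀ A B : ℕ → Matrix (Fin 2) (Fin 2) ℝ, (∀ n, A n ∈ 𝒜) → (∀ n, B n ∈ ℬ) →
        ∀ n, 1 ≤ n → α ^ n ≤ ‖prodAB A B n‖) ∧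
      (∀ x : Fin 2 → ℝ, ∀ A : ℕ → Matrix (Fin 2) (Fin 2) ℝ, (∀ n, A n ∈ 𝒜) →
        ∃ B : ℕ → Matrix (Fin 2) (Fin 2) ℝ, (∀ n, B n ∈ ℬ) ∧
          Filter.Tendsto (fun n => (prodAB A B n).mulVec x) Filter.atTop
            (nhds 0)) := by
  classical
  set ℬ : Set (Matrix (Fin 2) (Fin 2) ℝ) :=
    (fun P : Matrix (Fin 2) (Fin 2) ℝ × Matrix (Fin 2) (Fin 2) ℝ => P.1⁻¹ * P.2) ''
      (𝒜 ×ˢ {C | C ∈ wmats}) with hB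
  have hdetB : ∀ B ∈ ℬ, B.det = 9/8 := by
    rintro B ⟨⟨A, C⟩, ⟨hA, hC⟩, rfl⟩
    have hCd : C.det = 9/8 := det_wmats C hC
    simp only [Matrix.det_mul, Matrix.det_nonsing_inv, hdet A hA, hCd]
    simp
  refine ⟨ℬ, 21/20, ?_, by norm_num, ?_, ?_, ?_⟩
  · exact (h𝒜.prod (wmats.finite_toSet)).image _
  · intro B hBm
    rw [hdetB B hBm]; norm_num
  · -- growth
    intro A B hA hBm n _
    have hdetn : ∀ m : ℕ, (9/8 : ℝ)^m ≤ |(prodAB A B m).det| := by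
      intro m
      induction m with
      | zero => simp [prodAB]
      | succ k ih =>
        show (9/8 : ℝ)^(k+1) ≤ |(A (k+1) * B (k+1) * prodAB A B k).det|
        rw [Matrix.det_mul, Matrix.det_mul, abs_mul, abs_mul,
          hdet _ (hA (k+1)), hdetB _ (hBm (k+1))]
        rw [pow_succ]
        have h98 : |(9/8 : ℝ)| = 9/8 := by norm_num
        rw [h98, abs_one, one_mul]
        nlinarith [ih, pow_nonneg (by norm_num : (0:ℝ) ≤ 9/8) k]
    have h2 : ((21/20 : ℝ)^n)^2 ≤ ‖prodAB A B n‖ * ‖prodAB A B n‖ := by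
      have e1 : ((21/20 : ℝ)^n)^2 = (441/400 : ℝ)^n := by
        rw [← pow_mul, mul_comm, pow_mul]; norm_num
      have e2 : (441/400 : ℝ)^n ≤ (9/8 : ℝ)^n :=
        pow_le_pow_left₀ (by norm_num) (by norm_num) n
      calc ((21/20 : ℝ)^n)^2 = (441/400 : ℝ)^n := e1
        _ ≤ (9/8 : ℝ)^n := e2
        _ ≤ |(prodAB A B n).det| := hdetn n
        _ ≤ ‖prodAB A B n‖ * ‖prodAB A B n‖ := abs_det_le _
    nlinarith [h2, norm_nonneg (prodAB A B n),
      pow_nonneg (by norm_num : (0:ℝ) ≤ 21/20) n]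
  · -- pointwise contraction
    intro x A hA
    choose g hg1 hg2 using cover
    set Y : ℕ → (Fin 2 → ℝ) := fun n => Nat.rec x (fun _ ih => (g ih).mulVec ih) n with hYdef
    have hY0 : Y 0 = x := rfl
    have hYs : ∀ n, Y (n+1) = (g (Y n)).mulVec (Y n) := fun n => rfl
    set Bf : ℕ → Matrix (Fin 2) (Fin 2) ℝ := fun n => (A n)⁻¹ * g (Y (n-1)) with hBf
    refine ⟨Bf, ?_, ?_⟩
    · intro n
      exact ⟨(A n, g (Y (n-1))), Set.mk_mem_prod (hA n) (hg1 _), rfl⟩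
    · have hprod : ∀ n, (prodAB A Bf n).mulVec x = Y n := by
        intro n
        induction n with
        | zero => simp [prodAB, Matrix.one_mulVec, hY0]
        | succ k ih =>
          have hu : IsUnit (A (k+1)).det := by
            rw [hdet _ (hA (k+1))]; exact isUnit_one
          show ((A (k+1) * Bf (k+1) * prodAB A Bf k).mulVec x) = Y (k+1)
          rw [← Matrix.mulVec_mulVec, ih]
          have hBfk : Bf (k+1) = (A (k+1))⁻¹ * g (Y k) := by
            rw [hBf]; simp
          rw [hBfk, ← Matrix.mul_assoc, Matrix.mul_nonsing_inv _ hu, Matrix.one_mul,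
            hYs k]
      have heq : (fun n => (prodAB A Bf n).mulVec x) = Y := funext hprod
      rw [heq]
      have hn2x : 0 ≤ n2 x := by simp only [n2]; positivity
      have hn2 : ∀ n, n2 (Y n) ≤ (1/2 : ℝ)^n * n2 x := by
        intro n
        induction n with
        | zero => simp [hY0]
        | succ k ih =>
          calc n2 (Y (k+1)) = n2 ((g (Y k)).mulVec (Y k)) := by rw [hYs]
            _ ≤ 1/2 * n2 (Y k) := hg2 _
            _ ≤ 1/2 * ((1/2 : ℝ)^k * n2 x) := by linarith
            _ = (1/2 : ℝ)^(k+1) * n2 x := by ring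
      rw [tendsto_pi_nhds]
      intro i
      have hbound : ∀ n, |Y n i| ≤ (3/4 : ℝ)^n * (1 + n2 x) := by
        intro n
        have hsq : (Y n i)^2 ≤ (1/2 : ℝ)^n * n2 x := by
          have hc : (Y n i)^2 ≤ n2 (Y n) := by
            have h0 := sq_nonneg (Y n 0)
            have h1 := sq_nonneg (Y n 1)
            fin_cases i
            · simp only [n2]; exact le_add_of_nonneg_right h1
            · simp only [n2]; exact le_add_of_nonneg_left h0
          exact hc.trans (hn2 n)
        have ht2 : ((3/4 : ℝ)^n)^2 = (9/16 : ℝ)^n := by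
          rw [← pow_mul, mul_comm, pow_mul]; norm_num
        have hpow : (1/2 : ℝ)^n ≤ (9/16 : ℝ)^n :=
          pow_le_pow_left₀ (by norm_num) (by norm_num) n
        have hT0 : (0:ℝ) ≤ (3/4 : ℝ)^n * (1 + n2 x) := by positivity
        have h916 : (0:ℝ) ≤ (9/16 : ℝ)^n := by positivity
        have key : (1/2 : ℝ)^n * n2 x ≤ ((3/4 : ℝ)^n * (1 + n2 x))^2 := by
          nlinarith [mul_nonneg h916 hn2x, mul_nonneg h916 (sq_nonneg (n2 x)),
            mul_nonneg (sub_nonneg.2 hpow) hn2x, h916, ht2]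
        have hsq2 : (Y n i)^2 ≤ ((3/4 : ℝ)^n * (1 + n2 x))^2 := hsq.trans key
        rw [abs_le]
        constructor <;> nlinarith [hsq2, hT0,
          sq_nonneg (Y n i + (3/4 : ℝ)^n * (1 + n2 x)),
          sq_nonneg (Y n i - (3/4 : ℝ)^n * (1 + n2 x))]
      have hgeo : Filter.Tendsto (fun n => (3/4 : ℝ)^n * (1 + n2 x)) Filter.atTop (nhds 0) := by
        have := (tendsto_pow_atTop_nhds_zero_of_lt_one
          (by norm_num : (0:ℝ) ≤ 3/4) (by norm_num : (3/4:ℝ) < 1)).mul_const (1 + n2 x)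
        simpa using this
      have habs : Filter.Tendsto (fun n => |Y n i|) Filter.atTop (nhds 0) :=
        squeeze_zero (fun n => abs_nonneg _) hbound hgeo
      have : Filter.Tendsto (fun n => Y n i) Filter.atTop (nhds 0) :=
        (tendsto_zero_iff_abs_tendsto_zero _).mpr habs
      simpa using this
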